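/- For every λ ∈ ℂ with λ ≠ 0 and every μ, α ∈ ℂ, there exist c ∈ ℂ with c ≠ 0, θ ∈ ℝ, a ∈ ℂ, and b ∈ ℝ with b ≥ 0, such that for all z ∈ ℂ: (λ z + μ) e^{α z − |z|²/2} = c · v_b(e^{iθ} z + a) · exp((\overline{e^{iθ} z} · a − e^{iθ} z · \overline{a})/2), where v_b(w) = (w − b(2+b²)/(1+b²)) exp(−|w|²/2 + (b/(1+b²)) w). -/

import Mathlib

/-- The (unnormalized) stationary profile
`v_b(w) = (w - b(2+b²)/(1+b²)) e^{-|w|²/2 + (b/(1+b²)) w}`. -/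
noncomputable def vB (b : ℝ) (w : ℂ) : ℂ :=
  (w - ((b * (2 + b ^ 2) / (1 + b ^ 2) : ℝ) : ℂ)) *
    Complex.exp (-(‖w‖ : ℂ) ^ 2 / 2 + ((b / (1 + b ^ 2) : ℝ) : ℂ) * w)

/-- **The manifold `{(λz+μ)e^{αz-|z|²/2}}` consists of stationary profiles.**
Every `(λz+μ)e^{αz-|z|²/2}` with `λ ≠ 0` equals, up to a nonzero constant multiple,
a space rotation `L_θ` and a magnetic translation `R_a`, the profile `v_b` for some `b ≥ 0`. -/
theorem line_profile_is_rotated_translated_vB (lam : ℂ) (hlam : lam ≠ 0) (mu alph : ℂ) :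
    ∃ c : ℂ, c ≠ 0 ∧ ∃ (θ : ℝ) (a : ℂ) (b : ℝ), 0 ≤ b ∧
      ∀ z : ℂ,
        (lam * z + mu) * Complex.exp (alph * z - (‖z‖ : ℂ) ^ 2 / 2) =
          c * vB b (Complex.exp (θ * Complex.I) * z + a) *
            Complex.exp (((starRingEnd ℂ) (Complex.exp (θ * Complex.I) * z) * a -
              Complex.exp (θ * Complex.I) * z * (starRingEnd ℂ) a) / 2) := by
  have hnorm : ∀ u : ℂ, ((‖u‖ : ℂ)) ^ 2 = u * (starRingEnd ℂ) u := by
    intro u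
    calc ((‖u‖ : ℂ)) ^ 2 = ((‖u‖ ^ 2 : ℝ) : ℂ) := by push_cast; ring
      _ = (Complex.normSq u : ℂ) := by rw [← Complex.sq_norm]
      _ = u * (starRingEnd ℂ) u := (Complex.mul_conj u).symm
  set s : ℂ := mu / lam + (starRingEnd ℂ) alph with hs
  set b : ℝ := ‖s‖ with hb
  set θ : ℝ := -Complex.arg (-s) with hθ
  set e : ℂ := Complex.exp ((θ : ℂ) * Complex.I) with he
  have hee : e * (starRingEnd ℂ) e = 1 := by
    rw [Complex.mul_conj]
    norm_cast
    simp [Complex.normSq_eq_norm_sq, he, Complex.norm_exp_ofReal_mul_I]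
  have hce : (starRingEnd ℂ) e = Complex.exp ((Complex.arg (-s) : ℂ) * Complex.I) := by
    rw [he, ← Complex.exp_conj]
    congr 1
    simp [hθ]
  have h1 : (b : ℂ) * (starRingEnd ℂ) e = -s := by
    rw [hce, hb]
    have h := Complex.norm_mul_exp_arg_mul_I (-s)
    have habs : ‖-s‖ = ‖s‖ := by simp
    rw [habs] at h
    exact h
  have hse : s * e = -(b : ℂ) := by
    have h2 : (starRingEnd ℂ) e * e = 1 := by rw [mul_comm]; exact hee
    calc s * e = -(((b : ℂ) * (starRingEnd ℂ) e)) * e := by rw [h1]; ring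
      _ = -(b : ℂ) * ((starRingEnd ℂ) e * e) := by ring
      _ = -(b : ℂ) := by rw [h2, mul_one]
  have hb2 : (1 : ℝ) + b ^ 2 ≠ 0 := by positivity
  -- the two real parameters
  set γ : ℝ := b / (1 + b ^ 2) with hγ
  set β : ℝ := b * (2 + b ^ 2) / (1 + b ^ 2) with hβ
  have hgbR : γ - β = -b := by rw [hγ, hβ]; field_simp; ring
  have hgb : (γ : ℂ) - (β : ℂ) = -(b : ℂ) := by exact_mod_cast hgbR
  set a : ℂ := (γ : ℂ) - (starRingEnd ℂ) alph * e with ha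
  have hca : (starRingEnd ℂ) a = (γ : ℂ) - alph * (starRingEnd ℂ) e := by
    rw [ha]; simp [map_sub, map_mul, Complex.conj_conj, Complex.conj_ofReal]
  have h_alph : e * (starRingEnd ℂ) a = e * (γ : ℂ) - alph := by
    rw [hca]
    linear_combination (-alph) * hee
  have hsl : s * lam = mu + (starRingEnd ℂ) alph * lam := by
    rw [hs]; field_simp
  have hmu : lam * (starRingEnd ℂ) e * (a - (β : ℂ)) = mu := by
    have haβ : a - (β : ℂ) = (s - (starRingEnd ℂ) alph) * e := by
      have h3 : a - (β : ℂ) = ((γ : ℂ) - (β : ℂ)) - (starRingEnd ℂ) alph * e := by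
        rw [ha]; ring
      rw [h3, hgb, ← hse]; ring
    rw [haβ]
    linear_combination lam * (s - (starRingEnd ℂ) alph) * hee + hsl
  set K : ℂ := (starRingEnd ℂ) a * a / 2 - (γ : ℂ) * a with hK
  refine ⟨lam * (starRingEnd ℂ) e * Complex.exp K, ?_, θ, a, b, norm_nonneg s, ?_⟩
  · refine mul_ne_zero (mul_ne_zero hlam ?_) (Complex.exp_ne_zero K)
    simp only [ne_eq, map_eq_zero]
    exact Complex.exp_ne_zero _
  intro z
  rw [← he]
  simp only [vB, ← hγ, ← hβ]
  rw [hnorm z, hnorm (e * z + a)]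
  simp only [map_add, map_mul]
  have hexpo : K + (-((e * z + a) * ((starRingEnd ℂ) e * (starRingEnd ℂ) z + (starRingEnd ℂ) a)) / 2
        + (γ : ℂ) * (e * z + a))
      + ((starRingEnd ℂ) e * (starRingEnd ℂ) z * a
        - e * z * (starRingEnd ℂ) a) / 2
      = alph * z - z * (starRingEnd ℂ) z / 2 := by
    rw [hK]
    linear_combination (-(z * (starRingEnd ℂ) z) / 2) * hee - z * h_alph
  have hpoly : lam * (starRingEnd ℂ) e * (e * z + a - (β : ℂ)) = lam * z + mu := by
    linear_combination lam * z * hee + hmu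
  calc (lam * z + mu) * Complex.exp (alph * z - z * (starRingEnd ℂ) z / 2)
      = lam * (starRingEnd ℂ) e * (e * z + a - (β : ℂ)) *
          Complex.exp (K + (-((e * z + a) * ((starRingEnd ℂ) e * (starRingEnd ℂ) z + (starRingEnd ℂ) a)) / 2
            + (γ : ℂ) * (e * z + a))
          + ((starRingEnd ℂ) e * (starRingEnd ℂ) z * a
            - e * z * (starRingEnd ℂ) a) / 2) := by
        rw [hexpo, hpoly]
    _ = lam * (starRingEnd ℂ) e * Complex.exp K *
          ((e * z + a - (β : ℂ)) *
            Complex.exp (-((e * z + a) * ((starRingEnd ℂ) e * (starRingEnd ℂ) z + (starRingEnd ℂ) a)) / 2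
              + (γ : ℂ) * (e * z + a))) *
          Complex.exp (((starRingEnd ℂ) e * (starRingEnd ℂ) z * a
            - e * z * (starRingEnd ℂ) a) / 2) := by
        rw [Complex.exp_add, Complex.exp_add]; ring
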